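/- Let p ≥ 3 be a prime, Π a finite projective plane of order p², and c a code word of C(Π)^⊥ of weight w(c) = 2p² − 2p + 2 + ε with 1 ≤ ε ≤ p − 2, taking no values outside {0, 1, p−1} and with ||K₁| − |K_{p−1}|| = p. Then Π admits a Baer subplane: there exist a Baer subplane B of Π and a line ℓ of Π incident with exactly p + 1 points of B such that c = 𝟙_B − 𝟙_ℓ or c = 𝟙_ℓ − 𝟙_B. -/

import Mathlib

set_option linter.unusedSectionVars false

/-- A projective plane of order `n`, given by an abstract incidence relation `R`. -/
structure IsProjectivePlaneOrder {P L : Type*} (n : ℕ) (R : P → L → Prop) : Prop where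
  existsUnique_line : ∀ x y : P, x ≠ y → ∃! l : L, R x l ∧ R y l
  existsUnique_point : ∀ l m : L, l ≠ m → ∃! x : P, R x l ∧ R x m
  quadrangle : ∃ a b c d : P, a ≠ b ∧ a ≠ c ∧ a ≠ d ∧ b ≠ c ∧ b ≠ d ∧ c ≠ d ∧
    ∀ l : L, ¬(R a l ∧ R b l ∧ R c l) ∧ ¬(R a l ∧ R b l ∧ R d l) ∧
      ¬(R a l ∧ R c l ∧ R d l) ∧ ¬(R b l ∧ R c l ∧ R d l)
  line_card : ∀ l : L, {x | R x l}.ncard = n + 1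
  point_card : ∀ x : P, {l | R x l}.ncard = n + 1

section Counting
variable {Pt Ln : Type} [Fintype Pt] [Fintype Ln] [DecidableEq Pt] [DecidableEq Ln]

def ptsOf (R : Pt → Ln → Prop) [∀ x l, Decidable (R x l)] (l : Ln) : Finset Pt :=
  Finset.univ.filter (fun x => R x l)

def lnsOf (R : Pt → Ln → Prop) [∀ x l, Decidable (R x l)] (x : Pt) : Finset Ln :=
  Finset.univ.filter (fun l => R x l)

variable {n : ℕ} {R : Pt → Ln → Prop} [∀ x l, Decidable (R x l)]

lemma coe_ptsOf (l : Ln) : ({x | R x l} : Set Pt) = ↑(ptsOf R l) := by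
  ext x; simp [ptsOf]

lemma card_ptsOf (hPP : IsProjectivePlaneOrder n R) (l : Ln) : (ptsOf R l).card = n + 1 := by
  have h := hPP.line_card l
  rwa [coe_ptsOf, Set.ncard_coe_finset] at h

lemma card_lnsOf (hPP : IsProjectivePlaneOrder n R) (x : Pt) : (lnsOf R x).card = n + 1 := by
  have h := hPP.point_card x
  rwa [show {l | R x l} = ↑(lnsOf R x) from by ext l; simp [lnsOf], Set.ncard_coe_finset] at h

lemma pair_line_card (hPP : IsProjectivePlaneOrder n R) {x y : Pt} (h : x ≠ y) :
    (Finset.univ.filter fun l => R x l ∧ R y l).card = 1 := by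
  obtain ⟨l0, hl0, hu⟩ := hPP.existsUnique_line x y h
  rw [Finset.card_eq_one]
  refine ⟨l0, ?_⟩
  ext l
  simp only [Finset.mem_filter, Finset.mem_univ, true_and, Finset.mem_singleton]
  exact ⟨fun hl => hu l hl, fun hl => hl ▸ hl0⟩

lemma pair_pt_unique (hPP : IsProjectivePlaneOrder n R) {l m : Ln} (h : l ≠ m) :
    ∃ z : Pt, ptsOf R l ∩ ptsOf R m = {z} := by
  obtain ⟨z, hz, hu⟩ := hPP.existsUnique_point l m h
  refine ⟨z, ?_⟩
  ext x
  simp only [Finset.mem_inter, ptsOf, Finset.mem_filter, Finset.mem_univ, true_and,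
    Finset.mem_singleton]
  exact ⟨fun hl => hu x hl, fun hl => hl ▸ hz⟩

lemma card_inter_eq_sum (S : Finset Pt) (l : Ln) :
    (S ∩ ptsOf R l).card = ∑ y ∈ S, (if R y l then 1 else 0) := by
  rw [← Finset.card_filter]
  congr 1
  ext x
  simp [ptsOf, Finset.mem_filter, and_comm]

/-- L4: the master per-point double count. -/
lemma sum_card_inter_lns (hPP : IsProjectivePlaneOrder n R) (S : Finset Pt) (x : Pt) :
    ∑ l ∈ lnsOf R x, (S ∩ ptsOf R l).card = S.card + (if x ∈ S then n else 0) := by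
  have h1 : ∑ l ∈ lnsOf R x, (S ∩ ptsOf R l).card
      = ∑ y ∈ S, ∑ l ∈ lnsOf R x, (if R y l then 1 else 0) := by
    rw [Finset.sum_comm]
    exact Finset.sum_congr rfl fun l _ => card_inter_eq_sum S l
  have h2 : ∀ y ∈ S, (∑ l ∈ lnsOf R x, (if R y l then 1 else 0))
      = (if y = x then n + 1 else 1) := by
    intro y _
    have : ∑ l ∈ lnsOf R x, (if R y l then 1 else 0)
        = (Finset.univ.filter fun l => R x l ∧ R y l).card := by
      rw [Finset.card_filter, lnsOf, Finset.sum_filter]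
      refine Finset.sum_congr rfl fun l _ => ?_
      by_cases h1 : R x l <;> by_cases h2 : R y l <;> simp [h1, h2]
    rw [this]
    by_cases hyx : y = x
    · subst hyx
      have : (Finset.univ.filter fun l => R y l ∧ R y l) = lnsOf R y := by
        ext l; simp [lnsOf]
      rw [if_pos rfl, this, card_lnsOf hPP]
    · rw [if_neg hyx, pair_line_card hPP (fun h => hyx h.symm)]
  rw [h1, Finset.sum_congr rfl h2]
  have : ∑ y ∈ S, (if y = x then n + 1 else 1) = ∑ y ∈ S, (1 + if y = x then n else 0) := by
    refine Finset.sum_congr rfl fun y _ => by by_cases h : y = x <;> simp [h, Nat.add_comm]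
  rw [this, Finset.sum_add_distrib, Finset.sum_const, smul_eq_mul, mul_one,
    Finset.sum_ite_eq' S x (fun _ => n)]

/-- L5: global incidence count. -/
lemma sum_card_inter_univ (hPP : IsProjectivePlaneOrder n R) (S : Finset Pt) :
    ∑ l : Ln, (S ∩ ptsOf R l).card = S.card * (n + 1) := by
  have h1 : ∑ l : Ln, (S ∩ ptsOf R l).card
      = ∑ y ∈ S, ∑ l : Ln, (if R y l then 1 else 0) := by
    rw [Finset.sum_comm]
    exact Finset.sum_congr rfl fun l _ => card_inter_eq_sum S l
  rw [h1]
  have h2 : ∀ y ∈ S, (∑ l : Ln, (if R y l then 1 else 0)) = n + 1 := by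
    intro y _
    rw [← Finset.card_filter]
    exact card_lnsOf hPP y
  rw [Finset.sum_congr rfl h2, Finset.sum_const, smul_eq_mul]

/-- Weighted swap: ∑_l |S∩l| g(l) = ∑_{y∈S} ∑_{l∋y} g(l)  (over ℤ). -/
lemma sum_weight (S : Finset Pt) (g : Ln → ℤ) :
    ∑ l : Ln, ((S ∩ ptsOf R l).card : ℤ) * g l = ∑ y ∈ S, ∑ l ∈ lnsOf R y, g l := by
  have h1 : ∀ l : Ln, ((S ∩ ptsOf R l).card : ℤ) * g l
      = ∑ y ∈ S, (if R y l then g l else 0) := by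
    intro l
    rw [card_inter_eq_sum]
    push_cast
    rw [Finset.sum_mul]
    refine Finset.sum_congr rfl fun y _ => ?_
    by_cases h : R y l <;> simp [h]
  rw [Finset.sum_congr rfl fun l _ => h1 l, Finset.sum_comm]
  refine Finset.sum_congr rfl fun y _ => ?_
  rw [lnsOf, Finset.sum_filter]


lemma sum_card_inter_lns_int (hPP : IsProjectivePlaneOrder n R) (S : Finset Pt) (x : Pt) :
    ∑ l ∈ lnsOf R x, ((S ∩ ptsOf R l).card : ℤ)
      = S.card + (if x ∈ S then (n : ℤ) else 0) := by
  have h := sum_card_inter_lns hPP S x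
  have h2 : ∑ l ∈ lnsOf R x, ((S ∩ ptsOf R l).card : ℤ)
      = ((∑ l ∈ lnsOf R x, (S ∩ ptsOf R l).card : ℕ) : ℤ) := by push_cast; rfl
  rw [h2, h]
  split_ifs <;> push_cast <;> ring

lemma sum_card_inter_univ_int (hPP : IsProjectivePlaneOrder n R) (S : Finset Pt) :
    ∑ l : Ln, ((S ∩ ptsOf R l).card : ℤ) = S.card * (n + 1) := by
  have h := sum_card_inter_univ hPP S
  have h2 : ∑ l : Ln, ((S ∩ ptsOf R l).card : ℤ)
      = ((∑ l : Ln, (S ∩ ptsOf R l).card : ℕ) : ℤ) := by push_cast; rfl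
  rw [h2, h]; push_cast; ring

end Counting

/-- A code word of the dual code `C(Π)^⊥`: a function from points to `F_p` summing
to zero on every line. -/
def IsDualCodeWord {P L : Type*} (p : ℕ) (R : P → L → Prop) (c : P → ZMod p) : Prop :=
  ∀ l : L, ∑ᶠ x ∈ {y : P | R y l}, c x = 0

/-- A Baer subplane of a projective plane of order `p ^ 2`. -/
def IsBaerSubplane {P L : Type*} (p : ℕ) (R : P → L → Prop) (B : Set P) : Prop :=
  B.ncard = p ^ 2 + p + 1 ∧
    ∀ l : L, (B ∩ {x | R x l}).ncard = 1 ∨ (B ∩ {x | R x l}).ncard = p + 1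

/-- The `F_p`-valued indicator function of a point set. -/
noncomputable def ind {P : Type*} (p : ℕ) (S : Set P) : P → ZMod p :=
  S.indicator fun _ => 1

set_option maxHeartbeats 4000000 in
theorem aux_baer {Pt Ln : Type} [Finite Pt] [Finite Ln]
    (p : ℕ) (hp : p.Prime) (hp3 : 3 ≤ p)
    (R : Pt → Ln → Prop) (hPP : IsProjectivePlaneOrder (p ^ 2) R)
    (c : Pt → ZMod p) (hc : IsDualCodeWord p R c)
    (hW : (Function.support c).ncard + p ≤ 2 * p ^ 2)
    (hval : ∀ x : Pt, c x = 0 ∨ c x = 1 ∨ c x = -1)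
    (hsum : ({x | c x = 1} : Set Pt).ncard = ({x | c x = -1} : Set Pt).ncard + p) :
    ∃ (B : Set Pt) (ℓ : Ln), IsBaerSubplane p R B ∧ (B ∩ {x | R x ℓ}).ncard = p + 1 ∧
      c = ind p B - ind p {x | R x ℓ} := by
  classical
  cases nonempty_fintype Pt
  cases nonempty_fintype Ln
  haveI : NeZero p := ⟨by omega⟩
  haveI : Fact (1 < p) := ⟨by omega⟩
  -- basic ZMod facts
  have h2ne : ((2 : ℕ) : ZMod p) ≠ 0 := by
    rw [Ne, ZMod.natCast_eq_zero_iff]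
    intro hdvd
    have := Nat.le_of_dvd (by norm_num) hdvd
    omega
  have h1m1 : (1 : ZMod p) ≠ -1 := by
    intro h
    apply h2ne
    push_cast
    linear_combination h
  -- the two colour classes
  set A : Finset Pt := Finset.univ.filter (fun x => c x = 1) with hA
  set B : Finset Pt := Finset.univ.filter (fun x => c x = -1) with hB
  have hmemA : ∀ x, x ∈ A ↔ c x = 1 := by intro x; simp [hA]
  have hmemB : ∀ x, x ∈ B ↔ c x = -1 := by intro x; simp [hB]
  have hABdisj : ∀ x, x ∈ A → x ∈ B → False := by
    intro x hxA hxB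
    rw [hmemA] at hxA; rw [hmemB] at hxB
    exact h1m1 (hxA ▸ hxB)
  set az : ℤ := (A.card : ℤ) with haz
  set bz : ℤ := (B.card : ℤ) with hbz
  -- a = b + p
  have hacard : ({x | c x = 1} : Set Pt).ncard = A.card := by
    rw [show ({x | c x = 1} : Set Pt) = ↑A from by ext x; simp [hA], Set.ncard_coe_finset]
  have hbcard : ({x | c x = -1} : Set Pt).ncard = B.card := by
    rw [show ({x | c x = -1} : Set Pt) = ↑B from by ext x; simp [hB], Set.ncard_coe_finset]
  have habp : az = bz + p := by
    rw [hacard, hbcard] at hsum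
    simp only [haz, hbz, hsum]
    push_cast; ring
  -- b ≤ p² - p
  have hsupp : Function.support c = ↑(A ∪ B) := by
    ext x
    simp only [Function.mem_support, Finset.coe_union, Set.mem_union, Finset.mem_coe,
      hmemA, hmemB]
    constructor
    · intro h
      rcases hval x with h0 | h0 | h0
      · exact absurd h0 h
      · exact Or.inl h0
      · exact Or.inr h0
    · rintro (h | h) <;> rw [h]
      · exact one_ne_zero
      · exact neg_ne_zero.mpr one_ne_zero
  have hble : bz ≤ p ^ 2 - p := by
    have hcard : (Function.support c).ncard = A.card + B.card := by
      rw [hsupp, Set.ncard_coe_finset, Finset.card_union_of_disjoint]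
      rw [Finset.disjoint_left]
      intro x hxA hxB
      exact hABdisj x hxA hxB
    rw [hcard] at hW
    have : (A.card : ℤ) + B.card + p ≤ 2 * (p:ℤ) ^ 2 := by exact_mod_cast hW
    rw [← haz, ← hbz, habp] at this
    linarith
  -- line intersection counts
  set mA : Ln → ℤ := fun l => ((A ∩ ptsOf R l).card : ℤ) with hmA
  set mB : Ln → ℤ := fun l => ((B ∩ ptsOf R l).card : ℤ) with hmB
  set dd : Ln → ℤ := fun l => mA l - mB l with hdd
  have hRpts : ∀ (z : Pt) (l : Ln), z ∈ ptsOf R l ↔ R z l := by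
    intro z l; simp [ptsOf]
  have hRlns : ∀ (z : Pt) (l : Ln), l ∈ lnsOf R z ↔ R z l := by
    intro z l; simp [lnsOf]
  have hdvd : ∀ l, (p : ℤ) ∣ dd l := by
    intro l
    have h0 := hc l
    rw [coe_ptsOf (R := R) l, finsum_mem_coe_finset] at h0
    have hsplit : ∀ x, c x = (if x ∈ A then (1 : ZMod p) else 0) - (if x ∈ B then 1 else 0) := by
      intro x
      rcases hval x with h | h | h
      · rw [h, if_neg, if_neg]
        · ring
        · rw [hmemB, h]
          intro hh
          exact one_ne_zero (neg_injective (hh.symm.trans (neg_zero).symm))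
        · rw [hmemA, h]
          exact fun hh => one_ne_zero hh.symm
      · rw [h, if_pos ((hmemA x).mpr h), if_neg]
        · ring
        · rw [hmemB, h]
          exact h1m1
      · rw [h, if_neg, if_pos ((hmemB x).mpr h)]
        · ring
        · rw [hmemA, h]
          exact fun hh => h1m1 hh.symm
    have hsum0 : ∑ x ∈ ptsOf R l, (if x ∈ A then (1 : ZMod p) else 0)
        - ∑ x ∈ ptsOf R l, (if x ∈ B then (1 : ZMod p) else 0) = 0 := by
      rw [← Finset.sum_sub_distrib]
      rw [← Finset.sum_congr rfl (fun x _ => hsplit x)]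
      exact h0
    have hcA : ∑ x ∈ ptsOf R l, (if x ∈ A then (1 : ZMod p) else 0)
        = ((A ∩ ptsOf R l).card : ZMod p) := by
      rw [Finset.sum_ite_mem, Finset.sum_const, nsmul_eq_mul, mul_one, Finset.inter_comm]
    have hcB : ∑ x ∈ ptsOf R l, (if x ∈ B then (1 : ZMod p) else 0)
        = ((B ∩ ptsOf R l).card : ZMod p) := by
      rw [Finset.sum_ite_mem, Finset.sum_const, nsmul_eq_mul, mul_one, Finset.inter_comm]
    rw [hcA, hcB] at hsum0
    have : ((dd l : ℤ) : ZMod p) = 0 := by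
      have hcast : ((dd l : ℤ) : ZMod p)
          = ((A ∩ ptsOf R l).card : ZMod p) - ((B ∩ ptsOf R l).card : ZMod p) := by
        simp only [hdd, hmA, hmB]
        push_cast
        ring
      rw [hcast]
      exact hsum0
    exact (ZMod.intCast_zmod_eq_zero_iff_dvd _ p).mp this
  set s : Ln → ℤ := fun l => dd l / p with hs
  have hps : ∀ l, (p : ℤ) * s l = dd l := fun l => Int.mul_ediv_cancel' (hdvd l)
  have hmA0 : ∀ l, 0 ≤ mA l := fun l => Int.natCast_nonneg _
  have hmB0 : ∀ l, 0 ≤ mB l := fun l => Int.natCast_nonneg _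
  have hmAeq : ∀ l, mA l = mB l + p * s l := by
    intro l; rw [hps l, hdd]; ring
  -- the potential function
  set F : Ln → ℤ := fun l => mA l * (mB l + s l - 1) with hF
  have hpz : (3:ℤ) ≤ (p:ℤ) := by exact_mod_cast hp3
  have hp0 : (p:ℤ) ≠ 0 := by positivity
  have hFnn : ∀ l, 0 ≤ F l := by
    intro l
    rcases le_or_gt (s l) (-1) with hsl | hsl
    · have h3 : -(p:ℤ) * s l ≤ mB l := by
        have h4 := hmA0 l
        rw [hmAeq l] at h4
        linarith
      have h2 : 0 ≤ mB l + s l - 1 := by nlinarith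
      exact mul_nonneg (hmA0 l) h2
    · have hs0 : 0 ≤ s l := by omega
      rcases eq_or_lt_of_le hs0 with h0 | h0
      · have hFl : F l = mB l * (mB l - 1) := by
          rw [hF]
          simp only
          rw [hmAeq l, ← h0]
          ring
        rw [hFl]
        rcases le_or_gt (mB l) 0 with h | h
        · have hmb : mB l = 0 := le_antisymm h (hmB0 l)
          rw [hmb]; norm_num
        · nlinarith
      · have h1 : 0 ≤ mB l + s l - 1 := by
          have := hmB0 l
          omega
        exact mul_nonneg (hmA0 l) h1
  -- master count: ∑ F = (b - (p²-p)) (b + p)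
  have hcastn : ((p ^ 2 : ℕ) : ℤ) = (p:ℤ)^2 := by push_cast; ring
  have SB1 : ∑ l : Ln, mB l = bz * ((p:ℤ)^2 + 1) := by
    have h := sum_card_inter_univ_int hPP B
    rw [hcastn] at h
    exact h
  have SA1 : ∑ l : Ln, mA l = az * ((p:ℤ)^2 + 1) := by
    have h := sum_card_inter_univ_int hPP A
    rw [hcastn] at h
    exact h
  have hlnsA : ∀ y ∈ A, ∑ l ∈ lnsOf R y, dd l = (p:ℤ) + (p:ℤ)^2 := by
    intro y hy
    have hyB : y ∉ B := fun hB => hABdisj y hy hB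
    have h1 := sum_card_inter_lns_int hPP A y
    have h2 := sum_card_inter_lns_int hPP B y
    rw [if_pos hy, hcastn] at h1
    rw [if_neg hyB] at h2
    have hdds : ∑ l ∈ lnsOf R y, dd l
        = ∑ l ∈ lnsOf R y, mA l - ∑ l ∈ lnsOf R y, mB l := by
      rw [← Finset.sum_sub_distrib]
    rw [hdds, h1, h2, ← haz, ← hbz, habp]
    ring
  have hlnsB : ∀ y ∈ B, ∑ l ∈ lnsOf R y, dd l = (p:ℤ) - (p:ℤ)^2 := by
    intro y hy
    have hyA : y ∉ A := fun hA' => hABdisj y hA' hy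
    have h1 := sum_card_inter_lns_int hPP A y
    have h2 := sum_card_inter_lns_int hPP B y
    rw [if_neg hyA] at h1
    rw [if_pos hy, hcastn] at h2
    have hdds : ∑ l ∈ lnsOf R y, dd l
        = ∑ l ∈ lnsOf R y, mA l - ∑ l ∈ lnsOf R y, mB l := by
      rw [← Finset.sum_sub_distrib]
    rw [hdds, h1, h2, ← haz, ← hbz, habp]
    ring
  have hlnsBm : ∀ y ∈ B, ∑ l ∈ lnsOf R y, mB l = bz + (p:ℤ)^2 := by
    intro y hy
    have h2 := sum_card_inter_lns_int hPP B y
    rw [if_pos hy, hcastn] at h2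
    exact h2
  have SdB : ∑ l : Ln, dd l * mB l = bz * ((p:ℤ) - (p:ℤ)^2) := by
    have h := sum_weight (R := R) B dd
    have hl : ∑ l : Ln, dd l * mB l = ∑ l : Ln, ((B ∩ ptsOf R l).card : ℤ) * dd l := by
      refine Finset.sum_congr rfl fun l _ => ?_
      rw [mul_comm, hmB]
    rw [hl, h, Finset.sum_congr rfl hlnsB, Finset.sum_const, nsmul_eq_mul, hbz]
  have SdA : ∑ l : Ln, dd l * mA l = az * ((p:ℤ) + (p:ℤ)^2) := by
    have h := sum_weight (R := R) A dd
    have hl : ∑ l : Ln, dd l * mA l = ∑ l : Ln, ((A ∩ ptsOf R l).card : ℤ) * dd l := by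
      refine Finset.sum_congr rfl fun l _ => ?_
      rw [mul_comm, hmA]
    rw [hl, h, Finset.sum_congr rfl hlnsA, Finset.sum_const, nsmul_eq_mul, haz]
  have SmBB : ∑ l : Ln, mB l * mB l = bz * (bz + (p:ℤ)^2) := by
    have h := sum_weight (R := R) B mB
    have hl : ∑ l : Ln, mB l * mB l = ∑ l : Ln, ((B ∩ ptsOf R l).card : ℤ) * mB l := by
      refine Finset.sum_congr rfl fun l _ => ?_
      rw [hmB]
    rw [hl, h, Finset.sum_congr rfl hlnsBm, Finset.sum_const, nsmul_eq_mul, hbz]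
  have Sdd : ∑ l : Ln, dd l = az * ((p:ℤ)^2 + 1) - bz * ((p:ℤ)^2 + 1) := by
    have hdds : ∑ l : Ln, dd l = ∑ l : Ln, mA l - ∑ l : Ln, mB l := by
      rw [← Finset.sum_sub_distrib]
    rw [hdds, SA1, SB1]
  have Sd2 : ∑ l : Ln, dd l * dd l
      = az * ((p:ℤ) + (p:ℤ)^2) - bz * ((p:ℤ) - (p:ℤ)^2) := by
    have hdds : ∑ l : Ln, dd l * dd l
        = ∑ l : Ln, dd l * mA l - ∑ l : Ln, dd l * mB l := by
      rw [← Finset.sum_sub_distrib]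
      refine Finset.sum_congr rfl fun l _ => ?_
      rw [hdd]; ring
    rw [hdds, SdA, SdB]
  have hpF : ∀ l, (p:ℤ) * F l = p * (mB l * mB l) - p * mB l + dd l * dd l
      - p * dd l + (p+1) * (dd l * mB l) := by
    intro l
    have hddl : dd l = (p:ℤ) * s l := (hps l).symm
    rw [hF]
    simp only
    rw [hmAeq l, hddl]
    ring
  have hFsum : ∑ l : Ln, F l = (bz - ((p:ℤ) ^ 2 - p)) * (bz + p) := by
    apply mul_left_cancel₀ hp0
    rw [Finset.mul_sum]
    calc ∑ l : Ln, (p:ℤ) * F l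
        = ∑ l : Ln, (p * (mB l * mB l) - p * mB l + dd l * dd l
            - p * dd l + (p+1) * (dd l * mB l)) := Finset.sum_congr rfl fun l _ => hpF l
      _ = p * (∑ l : Ln, mB l * mB l) - p * (∑ l : Ln, mB l)
          + (∑ l : Ln, dd l * dd l) - p * (∑ l : Ln, dd l)
          + (p+1) * (∑ l : Ln, dd l * mB l) := by
          rw [Finset.sum_add_distrib, Finset.sum_sub_distrib, Finset.sum_add_distrib,
            Finset.sum_sub_distrib, ← Finset.mul_sum, ← Finset.mul_sum, ← Finset.mul_sum,
            ← Finset.mul_sum]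
      _ = (p:ℤ) * ((bz - ((p:ℤ) ^ 2 - p)) * (bz + p)) := by
          rw [SmBB, SB1, Sd2, Sdd, SdB, habp]
          ring
  -- conclude b = p² - p and F ≡ 0
  have hbeq : bz = (p:ℤ) ^ 2 - p := by
    have hnn : 0 ≤ ∑ l : Ln, F l := Finset.sum_nonneg fun l _ => hFnn l
    rw [hFsum] at hnn
    by_contra hne
    have hlt : bz - ((p:ℤ) ^ 2 - p) < 0 := by
      rcases lt_or_eq_of_le hble with h | h
      · linarith
      · exact absurd h hne
    have hpos : (0:ℤ) < bz + p := by
      have : (0:ℤ) ≤ bz := by rw [hbz]; exact Int.natCast_nonneg _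
      have : (0:ℤ) < p := by exact_mod_cast hp.pos
      linarith
    nlinarith
  have hF0 : ∀ l, F l = 0 := by
    have h0 : ∑ l : Ln, F l = 0 := by rw [hFsum, hbeq]; ring
    intro l
    exact (Finset.sum_eq_zero_iff_of_nonneg (fun l _ => hFnn l)).mp h0 l (Finset.mem_univ l)
  -- per-line classification
  have hkey : ∀ l, (s l ≤ -1 ∧ mA l = 0 ∧ mB l = -p * s l) ∨
      (s l = 0 ∧ mA l = mB l ∧ (mB l = 0 ∨ mB l = 1)) ∨
      (s l = 1 ∧ mB l = 0 ∧ mA l = p) := by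
    intro l
    rcases le_or_gt (s l) (-1) with hsl | hsl
    · left
      have h3 : -(p:ℤ) * s l ≤ mB l := by
        have h4 := hmA0 l
        rw [hmAeq l] at h4
        linarith
      have h2 : 0 < mB l + s l - 1 := by nlinarith
      have hmA0' : mA l = 0 := by
        have hFl := hF0 l
        rw [hF] at hFl
        simp only at hFl
        rcases mul_eq_zero.mp hFl with h | h
        · exact h
        · omega
      refine ⟨hsl, hmA0', ?_⟩
      have := hmAeq l
      rw [hmA0'] at this
      linarith
    · have hs0 : 0 ≤ s l := by omega
      rcases eq_or_lt_of_le hs0 with h0 | h0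
      · right; left
        have hFl := hF0 l
        rw [hF] at hFl
        simp only at hFl
        rw [hmAeq l, ← h0] at hFl
        refine ⟨h0.symm, by rw [hmAeq l, ← h0]; ring, ?_⟩
        rcases mul_eq_zero.mp hFl with h | h
        · left; linarith
        · right; linarith
      · right; right
        have hs1 : (1:ℤ) ≤ s l := h0
        have hmApos : 0 < mA l := by
          rw [hmAeq l]
          have := hmB0 l
          nlinarith
        have hFl := hF0 l
        rw [hF] at hFl
        simp only at hFl
        rcases mul_eq_zero.mp hFl with h | h
        · exact absurd h hmApos.ne'
        · have hmBv : mB l = 1 - s l := by linarith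
          have hsl1 : s l = 1 := by
            have := hmB0 l
            omega
          refine ⟨hsl1, by omega, ?_⟩
          rw [hmAeq l, hsl1]
          omega
  -- per-point analysis for points of B
  have hpt : ∀ x ∈ B, ∃ lx, lx ∈ lnsOf R x ∧ s lx = 1 - p ∧ B ⊆ ptsOf R lx ∧
      (∀ l, s l ≤ -1 → l ∈ lnsOf R x → l = lx) := by
    intro x hx
    have hxA : x ∉ A := fun h => hABdisj x h hx
    have h1 := sum_card_inter_lns_int hPP A x
    have h2 := sum_card_inter_lns_int hPP B x
    rw [if_neg hxA] at h1
    rw [if_pos hx, hcastn] at h2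
    have e2 : ∑ l ∈ lnsOf R x, mB l = bz + (p:ℤ)^2 := h2
    have e1 : ∑ l ∈ lnsOf R x, s l = 1 - (p:ℤ) := by
      have hdds : ∑ l ∈ lnsOf R x, dd l
          = ∑ l ∈ lnsOf R x, mA l - ∑ l ∈ lnsOf R x, mB l := by
        rw [← Finset.sum_sub_distrib]
      have hval1 : ∑ l ∈ lnsOf R x, dd l = (p:ℤ) - (p:ℤ)^2 := by
        rw [hdds, h1, h2, ← haz, ← hbz, habp]
        ring
      have : (p:ℤ) * ∑ l ∈ lnsOf R x, s l = (p:ℤ) * (1 - p) := by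
        rw [Finset.mul_sum, Finset.sum_congr rfl fun l _ => hps l, hval1]
        ring
      exact mul_left_cancel₀ hp0 this
    have hmB1 : ∀ l ∈ lnsOf R x, 1 ≤ mB l := by
      intro l hl
      have hxm : x ∈ B ∩ ptsOf R l :=
        Finset.mem_inter.mpr ⟨hx, (hRpts x l).mpr ((hRlns x l).mp hl)⟩
      have hpos := Finset.card_pos.mpr ⟨x, hxm⟩
      show (1:ℤ) ≤ ((B ∩ ptsOf R l).card : ℤ)
      exact_mod_cast hpos
    have hcase : ∀ l ∈ lnsOf R x, (s l ≤ -1 ∧ mB l = -p * s l) ∨ (s l = 0 ∧ mB l = 1) := by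
      intro l hl
      rcases hkey l with ⟨k1, k2, k3⟩ | ⟨k1, k2, k3⟩ | ⟨k1, k2, k3⟩
      · exact Or.inl ⟨k1, k3⟩
      · right
        refine ⟨k1, ?_⟩
        rcases k3 with h | h
        · exact absurd (hmB1 l hl) (by rw [h]; norm_num)
        · exact h
      · exact absurd (hmB1 l hl) (by rw [k2]; norm_num)
    have hNs : ∑ l ∈ (lnsOf R x).filter (fun l => s l ≤ -1), s l = 1 - (p:ℤ) := by
      have hsplit := Finset.sum_filter_add_sum_filter_not (lnsOf R x) (fun l => s l ≤ -1) s
      have hzero : ∑ l ∈ (lnsOf R x).filter (fun l => ¬ s l ≤ -1), s l = 0 := by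
        refine Finset.sum_eq_zero fun l hl => ?_
        have hm := Finset.mem_filter.mp hl
        rcases hcase l hm.1 with ⟨k1, _⟩ | ⟨k1, _⟩
        · exact absurd k1 hm.2
        · exact k1
      rw [hzero, add_zero] at hsplit
      rw [hsplit, e1]
    have hNm : ∑ l ∈ (lnsOf R x).filter (fun l => s l ≤ -1), mB l = (p:ℤ)^2 - p := by
      have : ∀ l ∈ (lnsOf R x).filter (fun l => s l ≤ -1), mB l = -p * s l := by
        intro l hl
        have hm := Finset.mem_filter.mp hl
        rcases hcase l hm.1 with ⟨_, k2⟩ | ⟨k1, _⟩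
        · exact k2
        · exact absurd hm.2 (by rw [k1]; norm_num)
      rw [Finset.sum_congr rfl this, ← Finset.mul_sum, hNs]
      ring
    have hcompm : ∑ l ∈ (lnsOf R x).filter (fun l => ¬ s l ≤ -1), mB l
        = (((lnsOf R x).filter (fun l => ¬ s l ≤ -1)).card : ℤ) := by
      rw [Finset.sum_congr rfl (fun l hl => ?_), Finset.sum_const, nsmul_eq_mul, mul_one]
      have hm := Finset.mem_filter.mp hl
      rcases hcase l hm.1 with ⟨k1, _⟩ | ⟨_, k2⟩
      · exact absurd k1 hm.2
      · exact k2
    have hcards : ((lnsOf R x).filter (fun l => s l ≤ -1)).card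
        + ((lnsOf R x).filter (fun l => ¬ s l ≤ -1)).card = p^2 + 1 := by
      rw [Finset.card_filter_add_card_filter_not, card_lnsOf hPP]
    have hcompcard : (((lnsOf R x).filter (fun l => ¬ s l ≤ -1)).card : ℤ) = (p:ℤ)^2 := by
      have hsplitm := Finset.sum_filter_add_sum_filter_not (lnsOf R x) (fun l => s l ≤ -1) mB
      rw [hNm, hcompm, e2, hbeq] at hsplitm
      linarith
    have hNcard : ((lnsOf R x).filter (fun l => s l ≤ -1)).card = 1 := by
      have h1' : (((lnsOf R x).filter (fun l => s l ≤ -1)).card : ℤ)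
          + (((lnsOf R x).filter (fun l => ¬ s l ≤ -1)).card : ℤ) = (p:ℤ)^2 + 1 := by
        exact_mod_cast hcards
      rw [hcompcard] at h1'
      exact_mod_cast (by linarith : (((lnsOf R x).filter (fun l => s l ≤ -1)).card : ℤ) = 1)
    obtain ⟨lx, hlx⟩ := Finset.card_eq_one.mp hNcard
    have hlxmem : lx ∈ (lnsOf R x).filter (fun l => s l ≤ -1) := by
      rw [hlx]; exact Finset.mem_singleton_self lx
    have hlxm := Finset.mem_filter.mp hlxmem
    have hslx : s lx = 1 - (p:ℤ) := by
      have := hNs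
      rw [hlx, Finset.sum_singleton] at this
      exact this
    have hmBlx : mB lx = (p:ℤ)^2 - p := by
      have := hNm
      rw [hlx, Finset.sum_singleton] at this
      exact this
    have hBsub : B ⊆ ptsOf R lx := by
      have hcardeq : (B ∩ ptsOf R lx).card = B.card := by
        have h' : ((B ∩ ptsOf R lx).card : ℤ) = (B.card : ℤ) := by
          show mB lx = (B.card : ℤ)
          rw [hmBlx, ← hbz, hbeq]
        exact_mod_cast h'
      have := Finset.eq_of_subset_of_card_le Finset.inter_subset_left (le_of_eq hcardeq.symm)
      exact Finset.inter_eq_left.mp this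
    refine ⟨lx, hlxm.1, hslx, hBsub, ?_⟩
    intro l hsl hl
    have : l ∈ (lnsOf R x).filter (fun l => s l ≤ -1) := Finset.mem_filter.mpr ⟨hl, hsl⟩
    rw [hlx] at this
    exact Finset.mem_singleton.mp this
  -- the special line
  have hBpos : 0 < B.card := by
    have hzz : (0:ℤ) < bz := by rw [hbeq]; nlinarith [show (3:ℤ) ≤ p by exact_mod_cast hp3]
    rw [hbz] at hzz
    exact_mod_cast hzz
  obtain ⟨x₀, hx₀⟩ := Finset.card_pos.mp hBpos
  obtain ⟨ℓ₀, hℓ₀mem, hℓ₀s, hℓ₀B, hℓ₀uniq⟩ := hpt x₀ hx₀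
  have hsneg : s ℓ₀ ≤ -1 := by rw [hℓ₀s]; nlinarith [show (3:ℤ) ≤ p by exact_mod_cast hp3]
  have hmAℓ₀ : mA ℓ₀ = 0 := by
    rcases hkey ℓ₀ with ⟨_, h, _⟩ | ⟨h, _, _⟩ | ⟨h, _, _⟩
    · exact h
    · rw [h] at hsneg; omega
    · rw [h] at hsneg; omega
  -- every negative line is ℓ₀
  have hB2 : 1 < B.card := by
    have : (1:ℤ) < bz := by rw [hbeq]; nlinarith
    rw [hbz] at this
    exact_mod_cast this
  obtain ⟨u, hu, v, hv, huv⟩ := Finset.one_lt_card.mp hB2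
  obtain ⟨lu, hlu, hluu⟩ := hPP.existsUnique_line u v huv
  have hBlineu : ∀ l' : Ln, B ⊆ ptsOf R l' → l' = lu := by
    intro l' hsub
    exact hluu l' ⟨(hRpts u l').mp (hsub hu), (hRpts v l').mp (hsub hv)⟩
  have hneg : ∀ l, s l ≤ -1 → l = ℓ₀ := by
    intro l hsl
    have hmBl : mB l = -p * s l := by
      rcases hkey l with ⟨_, _, k3⟩ | ⟨k1, _, _⟩ | ⟨k1, _, _⟩
      · exact k3
      · rw [k1] at hsl; omega
      · rw [k1] at hsl; omega
    have hpos : (0:ℤ) < mB l := by rw [hmBl]; nlinarith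
    have hposn : 0 < (B ∩ ptsOf R l).card := by
      have : (0:ℤ) < ((B ∩ ptsOf R l).card : ℤ) := hpos
      exact_mod_cast this
    obtain ⟨y, hy⟩ := Finset.card_pos.mp hposn
    have hyB : y ∈ B := (Finset.mem_inter.mp hy).1
    have hyl : l ∈ lnsOf R y := (hRlns y l).mpr ((hRpts y l).mp (Finset.mem_inter.mp hy).2)
    obtain ⟨ly, hlymem, hlys, hlyB, hlyuniq⟩ := hpt y hyB
    have h1 : l = ly := hlyuniq l hsl hyl
    have h2 : ly = lu := hBlineu ly hlyB
    have h3 : ℓ₀ = lu := hBlineu ℓ₀ hℓ₀B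
    rw [h1, h2, h3]
  -- classification of other lines
  have hclass : ∀ l, l ≠ ℓ₀ → (mA l = mB l ∧ (mB l = 0 ∨ mB l = 1))
      ∨ (mB l = 0 ∧ mA l = p) := by
    intro l hl
    rcases hkey l with ⟨h, _, _⟩ | ⟨_, h1, h2⟩ | ⟨_, h1, h2⟩
    · exact absurd (hneg l h) hl
    · exact Or.inl ⟨h1, h2⟩
    · exact Or.inr ⟨h1, h2⟩
  -- construction
  have hpleq : p ≤ p^2 := by nlinarith
  have hbN : B.card = p^2 - p := by
    have : (B.card:ℤ) = ((p^2 - p : ℕ) : ℤ) := by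
      rw [← hbz, hbeq]
      push_cast [hpleq]
      ring
    exact_mod_cast this
  have haN : A.card = p^2 := by
    have : (A.card:ℤ) = ((p^2 : ℕ) : ℤ) := by
      rw [← haz, habp, hbeq]
      push_cast
      ring
    exact_mod_cast this
  have hptsc : (ptsOf R ℓ₀).card = p^2 + 1 := card_ptsOf hPP ℓ₀
  set T : Finset Pt := ptsOf R ℓ₀ \ B with hT
  have hTcard : T.card = p + 1 := by
    rw [hT, Finset.card_sdiff_of_subset hℓ₀B, hptsc, hbN]
    omega
  have hAdisj : ∀ z, z ∈ A → z ∈ ptsOf R ℓ₀ → False := by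
    intro z hz1 hz2
    have hc0 : (A ∩ ptsOf R ℓ₀).card = 0 := by
      have : ((A ∩ ptsOf R ℓ₀).card : ℤ) = 0 := hmAℓ₀
      exact_mod_cast this
    rw [Finset.card_eq_zero] at hc0
    have : z ∈ A ∩ ptsOf R ℓ₀ := Finset.mem_inter.mpr ⟨hz1, hz2⟩
    rw [hc0] at this
    exact absurd this (Finset.notMem_empty z)
  set Bh : Finset Pt := A ∪ T with hBh
  have hATdisj : Disjoint A T := by
    rw [Finset.disjoint_left]
    intro z hz hzT
    exact hAdisj z hz (Finset.mem_sdiff.mp hzT).1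
  have hBhcard : Bh.card = p^2 + p + 1 := by
    rw [hBh, Finset.card_union_of_disjoint hATdisj, haN, hTcard]
    omega
  have hBhinter0 : Bh ∩ ptsOf R ℓ₀ = T := by
    ext z
    simp only [hBh, Finset.mem_inter, Finset.mem_union]
    constructor
    · rintro ⟨hz1 | hz1, hz2⟩
      · exact absurd hz2 (fun h => hAdisj z hz1 h)
      · exact hz1
    · intro hz
      exact ⟨Or.inr hz, (Finset.mem_sdiff.mp hz).1⟩
  have hline : ∀ l : Ln, (Bh ∩ ptsOf R l).card = 1 ∨ (Bh ∩ ptsOf R l).card = p + 1 := by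
    intro l
    by_cases hl : l = ℓ₀
    · right
      rw [hl, hBhinter0, hTcard]
    · obtain ⟨z, hz⟩ := pair_pt_unique hPP hl
      have hzl : z ∈ ptsOf R l := by
        have : z ∈ ptsOf R l ∩ ptsOf R ℓ₀ := by rw [hz]; exact Finset.mem_singleton_self z
        exact (Finset.mem_inter.mp this).1
      have hzl0 : z ∈ ptsOf R ℓ₀ := by
        have : z ∈ ptsOf R l ∩ ptsOf R ℓ₀ := by rw [hz]; exact Finset.mem_singleton_self z
        exact (Finset.mem_inter.mp this).2
      have hBl : B ∩ ptsOf R l = B ∩ {z} := by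
        ext y
        simp only [Finset.mem_inter, Finset.mem_singleton]
        constructor
        · rintro ⟨hy1, hy2⟩
          refine ⟨hy1, ?_⟩
          have : y ∈ ptsOf R l ∩ ptsOf R ℓ₀ := Finset.mem_inter.mpr ⟨hy2, hℓ₀B hy1⟩
          rw [hz] at this
          exact Finset.mem_singleton.mp this
        · rintro ⟨hy1, rfl⟩
          exact ⟨hy1, hzl⟩
      have hTl : T ∩ ptsOf R l = {z} \ B := by
        ext y
        simp only [hT, Finset.mem_inter, Finset.mem_sdiff, Finset.mem_singleton]
        constructor
        · rintro ⟨⟨hy1, hy2⟩, hy3⟩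
          have : y ∈ ptsOf R l ∩ ptsOf R ℓ₀ := Finset.mem_inter.mpr ⟨hy3, hy1⟩
          rw [hz] at this
          exact ⟨Finset.mem_singleton.mp this, hy2⟩
        · rintro ⟨rfl, hy2⟩
          exact ⟨⟨hzl0, hy2⟩, hzl⟩
      have hsplitcard : (Bh ∩ ptsOf R l).card
          = (A ∩ ptsOf R l).card + (T ∩ ptsOf R l).card := by
        rw [hBh, Finset.union_inter_distrib_right]
        exact Finset.card_union_of_disjoint
          (Finset.disjoint_of_subset_left Finset.inter_subset_left
            (Finset.disjoint_of_subset_right Finset.inter_subset_left hATdisj))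
      rcases hclass l hl with ⟨hABe, hB01⟩ | ⟨hB0, hAp⟩
      · left
        rw [hsplitcard]
        have hABn : (A ∩ ptsOf R l).card = (B ∩ ptsOf R l).card := by
          have : ((A ∩ ptsOf R l).card : ℤ) = ((B ∩ ptsOf R l).card : ℤ) := hABe
          exact_mod_cast this
        by_cases hzB : z ∈ B
        · have hB1 : (B ∩ ptsOf R l).card = 1 := by
            rw [hBl]
            rw [Finset.inter_singleton_of_mem hzB]
            exact Finset.card_singleton z
          have hT0 : (T ∩ ptsOf R l).card = 0 := by
            rw [hTl, Finset.card_eq_zero]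
            ext y
            simp only [Finset.mem_sdiff, Finset.mem_singleton, Finset.notMem_empty,
              iff_false, not_and]
            rintro rfl
            intro h
            exact h hzB
          rw [hABn, hB1, hT0]
        · have hB0' : (B ∩ ptsOf R l).card = 0 := by
            rw [hBl, Finset.inter_singleton_of_notMem hzB, Finset.card_empty]
          have hT1 : (T ∩ ptsOf R l).card = 1 := by
            rw [hTl]
            have : ({z} : Finset Pt) \ B = {z} := by
              rw [Finset.sdiff_eq_self_iff_disjoint, Finset.disjoint_left]
              intro y hy
              rw [Finset.mem_singleton] at hy
              subst hy
              exact fun h => hzB h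
            rw [this, Finset.card_singleton]
          rw [hABn, hB0', hT1]
      · right
        rw [hsplitcard]
        have hzB : z ∉ B := by
          intro hzB
          have : (1:ℤ) ≤ mB l := by
            have hxm : z ∈ B ∩ ptsOf R l := Finset.mem_inter.mpr ⟨hzB, hzl⟩
            have hpos := Finset.card_pos.mpr ⟨z, hxm⟩
            show (1:ℤ) ≤ ((B ∩ ptsOf R l).card : ℤ)
            exact_mod_cast hpos
          rw [hB0] at this
          omega
        have hApn : (A ∩ ptsOf R l).card = p := by
          have : ((A ∩ ptsOf R l).card : ℤ) = (p:ℤ) := hAp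
          exact_mod_cast this
        have hT1 : (T ∩ ptsOf R l).card = 1 := by
          rw [hTl]
          have : ({z} : Finset Pt) \ B = {z} := by
            rw [Finset.sdiff_eq_self_iff_disjoint, Finset.disjoint_left]
            intro y hy
            rw [Finset.mem_singleton] at hy
            subst hy
            exact fun h => hzB h
          rw [this, Finset.card_singleton]
        rw [hApn, hT1]
  -- assemble the result
  refine ⟨↑Bh, ℓ₀, ⟨?_, ?_⟩, ?_, ?_⟩
  · rw [Set.ncard_coe_finset, hBhcard]
  · intro l
    have hconv : ((↑Bh : Set Pt) ∩ {x | R x l}) = ↑(Bh ∩ ptsOf R l) := by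
      ext z
      simp [ptsOf]
    rw [hconv, Set.ncard_coe_finset]
    exact hline l
  · have hconv : ((↑Bh : Set Pt) ∩ {x | R x ℓ₀}) = ↑(Bh ∩ ptsOf R ℓ₀) := by
      ext z
      simp [ptsOf]
    rw [hconv, Set.ncard_coe_finset, hBhinter0, hTcard]
  · funext x
    have hindBh : ind p (↑Bh : Set Pt) x = if x ∈ Bh then (1 : ZMod p) else 0 := by
      rw [ind, Set.indicator_apply]
      simp only [Finset.mem_coe]
    have hindl : ind p {y | R y ℓ₀} x = if x ∈ ptsOf R ℓ₀ then (1 : ZMod p) else 0 := by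
      rw [ind, Set.indicator_apply]
      congr 1
      simp only [Set.mem_setOf_eq, eq_iff_iff]
      exact (hRpts x ℓ₀).symm
    rw [Pi.sub_apply, hindBh, hindl]
    rcases hval x with hx | hx | hx
    · -- c x = 0
      have hxA : x ∉ A := fun h => by
        rw [hmemA] at h
        rw [hx] at h
        exact one_ne_zero h.symm
      have hxB : x ∉ B := fun h => by
        rw [hmemB] at h
        rw [hx] at h
        exact one_ne_zero (neg_injective (h.symm.trans (neg_zero).symm))
      by_cases hR : x ∈ ptsOf R ℓ₀
      · have hxT : x ∈ T := Finset.mem_sdiff.mpr ⟨hR, hxB⟩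
        have hxBh : x ∈ Bh := Finset.mem_union_right A hxT
        rw [if_pos hxBh, if_pos hR, hx]
        ring
      · have hxBh : x ∉ Bh := by
          intro h
          rcases Finset.mem_union.mp h with h' | h'
          · exact hxA h'
          · exact hR (Finset.mem_sdiff.mp h').1
        rw [if_neg hxBh, if_neg hR, hx]
        ring
    · -- c x = 1
      have hxA : x ∈ A := (hmemA x).mpr hx
      have hxl : x ∉ ptsOf R ℓ₀ := fun h => hAdisj x hxA h
      have hxBh : x ∈ Bh := Finset.mem_union_left T hxA
      rw [if_pos hxBh, if_neg hxl, hx]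
      ring
    · -- c x = -1
      have hxB : x ∈ B := (hmemB x).mpr hx
      have hxA : x ∉ A := fun h => hABdisj x h hxB
      have hxT : x ∉ T := fun h => (Finset.mem_sdiff.mp h).2 hxB
      have hxBh : x ∉ Bh := by
        intro h
        rcases Finset.mem_union.mp h with h' | h'
        · exact hxA h'
        · exact hxT h'
      have hxl : x ∈ ptsOf R ℓ₀ := hℓ₀B hxB
      rw [if_neg hxBh, if_pos hxl, hx]
      ring

/-- A two-valued code word of weight `2p² - 2p + 2 + ε`, `1 ≤ ε ≤ p - 2`, with
`||K₁| - |K_{p-1}|| = p` comes from a Baer subplane and one of its secant lines. -/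
theorem baer_of_two_colour_difference_p {Pt Ln : Type} [Finite Pt] [Finite Ln]
    (p : ℕ) (hp : p.Prime) (hp3 : 3 ≤ p)
    (R : Pt → Ln → Prop) (hPP : IsProjectivePlaneOrder (p ^ 2) R)
    (c : Pt → ZMod p) (hc : IsDualCodeWord p R c)
    (ε : ℕ) (hε1 : 1 ≤ ε) (hε2 : ε ≤ p - 2)
    (hw : (Function.support c).ncard = 2 * p ^ 2 - 2 * p + 2 + ε)
    (hval : ∀ x : Pt, c x = 0 ∨ c x = 1 ∨ c x = -1)
    (hdiff : ((({x | c x = 1} : Set Pt).ncard : ℤ) -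
        ({x | c x = -1} : Set Pt).ncard).natAbs = p) :
    ∃ (B : Set Pt) (ℓ : Ln), IsBaerSubplane p R B ∧ (B ∩ {x | R x ℓ}).ncard = p + 1 ∧
      (c = ind p B - ind p {x | R x ℓ} ∨ c = ind p {x | R x ℓ} - ind p B) := by
  classical
  have hW : (Function.support c).ncard + p ≤ 2 * p ^ 2 := by
    have h2 : 2 * p ≤ 2 * p ^ 2 := by nlinarith
    omega
  have hcases : ({x | c x = 1} : Set Pt).ncard = ({x | c x = -1} : Set Pt).ncard + p ∨
      ({x | c x = -1} : Set Pt).ncard = ({x | c x = 1} : Set Pt).ncard + p := by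
    rcases Int.natAbs_eq_iff.mp hdiff with h | h
    · left; omega
    · right; omega
  rcases hcases with hsum | hsum
  · obtain ⟨B, ℓ, h1, h2, h3⟩ := aux_baer p hp hp3 R hPP c hc hW hval hsum
    exact ⟨B, ℓ, h1, h2, Or.inl h3⟩
  · -- apply to -c
    cases nonempty_fintype Pt
    have hptseq : ∀ l : Ln, {y : Pt | R y l} = ↑(Finset.univ.filter (fun y => R y l)) := by
      intro l; ext y; simp
    have hc' : IsDualCodeWord p R (-c) := by
      intro l
      have h0 := hc l
      rw [hptseq l, finsum_mem_coe_finset] at h0 ⊢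
      simpa [Finset.sum_neg_distrib] using h0
    have hW' : (Function.support (-c)).ncard + p ≤ 2 * p ^ 2 := by
      have hsupp : Function.support (-c) = Function.support c := by ext x; simp
      rwa [hsupp]
    have hval' : ∀ x : Pt, (-c) x = 0 ∨ (-c) x = 1 ∨ (-c) x = -1 := by
      intro x
      rcases hval x with h | h | h <;> simp [h]
    have hs1 : {x : Pt | (-c) x = 1} = {x | c x = -1} := by
      ext x; simp [Pi.neg_apply, neg_eq_iff_eq_neg]
    have hs2 : {x : Pt | (-c) x = -1} = {x | c x = 1} := by
      ext x; simp [Pi.neg_apply, neg_eq_iff_eq_neg]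
    have hsum' : ({x | (-c) x = 1} : Set Pt).ncard = ({x | (-c) x = -1} : Set Pt).ncard + p := by
      rw [hs1, hs2]; exact hsum
    obtain ⟨B, ℓ, h1, h2, h3⟩ := aux_baer p hp hp3 R hPP (-c) hc' hW' hval' hsum'
    refine ⟨B, ℓ, h1, h2, Or.inr ?_⟩
    have := congrArg (fun f => -f) h3
    simpa [neg_sub] using this
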